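/- Let G be a finite group of order e acting faithfully on a field K by automorphisms with fixed field C = K^G, and suppose [K : C] = e. If K ⊆ K' is an extension of fields with a G-action extending the one on K, and C' = (K')^G, then K and C' are linearly disjoint over C; in particular, any C-basis of K remains C'-linearly independent in K'. -/

import Mathlib

/-- Let G be a finite group of order e acting faithfully on a field K
with fixed field C = K^G and [K : C] = e. If K ⊆ K' is a G-equivariant field
extension and C' = (K')^G, then K and C' are linearly disjoint over C: any
C-linearly independent family in K remains C'-linearly independent in K'. -/
theorem fixed_field_linear_disjoint
    (K K' : Type*) [Field K] [Field K'] [Algebra K K']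
    (G : Type*) [Group G] [Finite G]
    [MulSemiringAction G K] [MulSemiringAction G K'] [FaithfulSMul G K]
    (hcompat : ∀ (g : G) (x : K), g • (algebraMap K K' x) = algebraMap K K' (g • x))
    (hstrict : Module.finrank (FixedPoints.subfield G K) K = Nat.card G)
    {ι : Type*} (v : ι → K)
    (hv : LinearIndependent (FixedPoints.subfield G K) v) :
    LinearIndependent (FixedPoints.subfield G K') (fun i => algebraMap K K' (v i)) := by
  classical
  cases nonempty_fintype G
  have hvinj : Function.Injective v := hv.injective
  have hX : LinearIndepOn (FixedPoints.subfield G K) id (Set.range v) :=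
    hv.linearIndepOn_id
  set J : Set K := hX.extend (Set.subset_univ _) with hJ
  let b : Module.Basis J (FixedPoints.subfield G K) K := Module.Basis.extend hX
  haveI : Fintype J := FiniteDimensional.fintypeBasisIndex b
  have hcard : Fintype.card J = Fintype.card G := by
    rw [← Module.finrank_eq_card_basis b, hstrict, Nat.card_eq_fintype_card]
  let e : J ≃ G := Fintype.equivOfCardEq hcard
  -- the coordinate functions over K
  have hb : LinearIndependent (FixedPoints.subfield G K) (fun j : J => (j : K)) := by
    have hb0 := b.linearIndependent
    have : ⇑b = fun j : J => (j : K) := funext (Module.Basis.extend_apply_self hX)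
    rwa [this] at hb0
  have hbt : LinearIndependent (FixedPoints.subfield G K)
      (fun i : (J.toFinset : Set K) => (i : K)) := by
    have := hb.comp (Equiv.setCongr (Set.coe_toFinset J)) (Equiv.injective _)
    exact this
  have hrowsK : LinearIndependent K
      (fun i : (J.toFinset : Set K) => MulAction.toFun G K (i : K)) :=
    FixedPoints.linearIndependent_smul_of_linearIndependent G K hbt
  have hrowsJ : LinearIndependent K (fun j : J => MulAction.toFun G K (j : K)) := by
    have := hrowsK.comp ((Equiv.setCongr (Set.coe_toFinset J)).symm) (Equiv.injective _)
    exact this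
  -- the matrix of conjugates and its invertibility
  let N : Matrix G G K := fun h g => g • ((e.symm h : J) : K)
  have hNrows : LinearIndependent K (fun h : G => N h) := by
    have := hrowsJ.comp e.symm (Equiv.injective _)
    exact this
  have hN : IsUnit N := Matrix.linearIndependent_rows_iff_isUnit.mp hNrows
  let N' : Matrix G G K' := N.map (algebraMap K K')
  have hN' : IsUnit N' := by
    have := hN.map ((algebraMap K K').mapMatrix)
    rwa [RingHom.mapMatrix_apply] at this
  have hrows' : LinearIndependent K' (fun h : G => N' h) :=
    Matrix.linearIndependent_rows_iff_isUnit.mpr hN'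
  -- our family of conjugate-vectors over K'
  have hmem : ∀ i, v i ∈ J := fun i =>
    hX.subset_extend (Set.subset_univ _) ⟨i, rfl⟩
  let F : ι → G → K' := fun i g => algebraMap K K' (g • v i)
  have hFeq : F = (fun h : G => N' h) ∘ (fun i => e ⟨v i, hmem i⟩) := by
    funext i g
    simp only [F, N', N, Function.comp_apply, Matrix.map_apply, Equiv.symm_apply_apply]
    show algebraMap K K' (g • v i) = algebraMap K K' (g • ((e.symm (e ⟨v i, hmem i⟩) : J) : K))
    rw [Equiv.symm_apply_apply]
  have hF : LinearIndependent K' F := by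
    rw [hFeq]
    exact hrows'.comp _ (fun i₁ i₂ h => hvinj (by
      have := e.injective h
      exact congrArg Subtype.val this))
  -- finish: a relation with coefficients in C' gives a relation among the F i
  rw [linearIndependent_iff']
  intro s c hsum i his
  have key : ∀ g : G, ∑ i ∈ s, (c i : K') * algebraMap K K' (g • v i) = 0 := by
    intro g
    have h := congrArg (fun x : K' => g • x) hsum
    simp only [Finset.smul_sum, smul_zero] at h
    rw [← h]
    refine Finset.sum_congr rfl fun i hi => ?_
    have hc : g • ((c i : K')) = (c i : K') := (c i).2 g
    calc (c i : K') * algebraMap K K' (g • v i)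
        = (g • (c i : K')) * (g • algebraMap K K' (v i)) := by rw [hc, hcompat]
      _ = g • ((c i : K') * algebraMap K K' (v i)) := (smul_mul' g _ _).symm
      _ = g • (c i • algebraMap K K' (v i)) := by
          rw [Submonoid.smul_def, smul_eq_mul]
  have h2 : ∑ i ∈ s, (c i : K') • F i = 0 := by
    funext g
    have := key g
    calc (∑ i ∈ s, (c i : K') • F i) g
        = ∑ i ∈ s, (c i : K') * F i g := by
          rw [Finset.sum_apply]; exact Finset.sum_congr rfl fun i _ => rfl
      _ = 0 := this
  have := linearIndependent_iff'.mp hF s (fun i => (c i : K')) h2 i his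
  exact Subtype.ext this
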